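/- For every k_0 ∈ ℕ, every N ≥ M, and every z ∈ ℂ, one has the determinant identity det((H_{N,M}^{k_0})^* (z · H_{N,M}^{k_0} − H_{N,M}^{k_0+1})) = det((H_{N,M}^{k_0})^* H_{N,M}^{k_0}) · P(z), where ^* denotes the conjugate transpose and P is the Prony polynomial. -/
import Mathlib

open Polynomial Finset Matrix

/-- The monomial-exponential sum `h(k) = ∑ j ∑ s, c j s * k ^ s * z j ^ k`. -/
noncomputable def hmes {n : ℕ} (z : Fin n → ℂ) (m : Fin n → ℕ)
    (c : (j : Fin n) → Fin (m j) → ℂ) (k : ℕ) : ℂ :=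
  ∑ j, ∑ s : Fin (m j), c j s * (k : ℂ) ^ (s : ℕ) * z j ^ k

/-- The `N × M'` Hankel matrix with entries `h (k0 + i + l)`. -/
def hankel (h : ℕ → ℂ) (k0 N M' : ℕ) : Matrix (Fin N) (Fin M') ℂ :=
  Matrix.of fun i l => h (k0 + (i : ℕ) + (l : ℕ))

/-! ### Auxiliary lemmas -/

noncomputable def theta (p : ℂ[X]) : ℂ[X] := X * derivative p

lemma theta_sum {α : Type*} (t : Finset α) (f : α → ℂ[X]) :
    theta (∑ i ∈ t, f i) = ∑ i ∈ t, theta (f i) := by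
  simp [theta, derivative_sum, Finset.mul_sum]

lemma theta_iter_sum {α : Type*} (s : ℕ) (t : Finset α) (f : α → ℂ[X]) :
    theta^[s] (∑ i ∈ t, f i) = ∑ i ∈ t, theta^[s] (f i) := by
  induction s with
  | zero => simp
  | succ s ih => simp only [Function.iterate_succ_apply', ih, theta_sum]

lemma theta_monomial (a : ℂ) (t : ℕ) : theta (C a * X ^ t) = C (a * t) * X ^ t := by
  rcases Nat.eq_zero_or_pos t with h | h
  · simp [h, theta]
  · obtain ⟨u, rfl⟩ := Nat.exists_eq_succ_of_ne_zero h.ne'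
    simp [theta, derivative_X_pow]
    ring

lemma theta_iter_monomial (s : ℕ) (a : ℂ) (t : ℕ) :
    theta^[s] (C a * X ^ t) = C (a * (t : ℂ) ^ s) * X ^ t := by
  induction s with
  | zero => simp
  | succ s ih =>
    rw [Function.iterate_succ_apply', ih, theta_monomial]
    ring_nf

lemma theta_iter_dvd_eval (s : ℕ) (r : ℂ) :
    ∀ Q : ℂ[X], (X - C r) ^ (s + 1) ∣ Q → (theta^[s] Q).eval r = 0 := by
  induction s with
  | zero =>
    intro Q hQ
    simpa using (dvd_iff_isRoot.mp (by simpa using hQ))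
  | succ s ih =>
    intro Q hQ
    obtain ⟨R, rfl⟩ := hQ
    rw [Function.iterate_succ_apply]
    apply ih
    refine ⟨X * ((C ((s : ℂ) + 2)) * R + (X - C r) * derivative R), ?_⟩
    simp only [theta, derivative_mul, derivative_pow, derivative_sub, derivative_X,
      derivative_C, sub_zero, mul_one, ← C_eq_natCast]
    push_cast
    ring

lemma coeff_pow_sum_eq_zero {P : ℂ[X]} {d : ℕ} (hd : P.natDegree < d)
    {r : ℂ} {s : ℕ} (hdvd : (X - C r) ^ (s + 1) ∣ P) (k : ℕ) :
    ∑ l ∈ Finset.range d, P.coeff l * ((k + l : ℕ) : ℂ) ^ s * r ^ (k + l) = 0 := by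
  have key : theta^[s] (X ^ k * P) =
      ∑ l ∈ Finset.range d, C (P.coeff l * ((k + l : ℕ) : ℂ) ^ s) * X ^ (k + l) := by
    conv_lhs => rw [P.as_sum_range' d hd]
    rw [Finset.mul_sum]
    have : ∀ l, X ^ k * (monomial l) (P.coeff l) = C (P.coeff l) * X ^ (k + l) := by
      intro l
      rw [← C_mul_X_pow_eq_monomial]
      ring
    simp only [this, theta_iter_sum, theta_iter_monomial]
  have h0 : (theta^[s] (X ^ k * P)).eval r = 0 :=
    theta_iter_dvd_eval s r _ (Dvd.dvd.mul_left hdvd _)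
  rw [key] at h0
  simp only [eval_finset_sum, eval_mul, eval_C, eval_pow, eval_X] at h0
  push_cast
  push_cast at h0
  convert h0 using 2

lemma prony_monic {n : ℕ} (z : Fin n → ℂ) (m : Fin n → ℕ) :
    (∏ j, (X - C (z j)) ^ m j).Monic :=
  monic_prod_of_monic _ _ fun j _ => (monic_X_sub_C (z j)).pow _

lemma prony_natDegree {n : ℕ} (z : Fin n → ℂ) (m : Fin n → ℕ) :
    (∏ j, (X - C (z j)) ^ m j).natDegree = ∑ j, m j := by
  rw [natDegree_prod_of_monic _ _ fun j _ => (monic_X_sub_C (z j)).pow _]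
  simp [natDegree_pow]

lemma hmes_recurrence {n : ℕ} (z : Fin n → ℂ) (m : Fin n → ℕ)
    (c : (j : Fin n) → Fin (m j) → ℂ) (k : ℕ) :
    ∑ l ∈ Finset.range (∑ j, m j + 1),
      (∏ j, (X - C (z j)) ^ m j).coeff l * hmes z m c (k + l) = 0 := by
  set P := ∏ j, (X - C (z j)) ^ m j with hP
  unfold hmes
  simp only [Finset.mul_sum]
  rw [Finset.sum_comm]
  refine Finset.sum_eq_zero fun j _ => ?_
  rw [Finset.sum_comm]
  refine Finset.sum_eq_zero fun s _ => ?_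
  have hdvd : (X - C (z j)) ^ ((s : ℕ) + 1) ∣ P :=
    dvd_trans (pow_dvd_pow _ (by omega : (s:ℕ)+1 ≤ m j)) (Finset.dvd_prod_of_mem _ (mem_univ j))
  have hkey := coeff_pow_sum_eq_zero (d := ∑ j, m j + 1)
    (by rw [prony_natDegree]; omega) hdvd k
  calc ∑ l ∈ Finset.range (∑ j, m j + 1), P.coeff l * (c j s * ((k+l : ℕ) : ℂ) ^ (s:ℕ) * z j ^ (k+l))
      = c j s * ∑ l ∈ Finset.range (∑ j, m j + 1),
          P.coeff l * ((k+l : ℕ) : ℂ) ^ (s:ℕ) * z j ^ (k+l) := by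
        rw [Finset.mul_sum]; exact Finset.sum_congr rfl fun l _ => by ring
    _ = 0 := by rw [hkey, mul_zero]

/-- The companion matrix of a monic polynomial with lower coefficients `p`. -/
def compM (M : ℕ) (p : Fin M → ℂ) : Matrix (Fin M) (Fin M) ℂ :=
  Matrix.of fun i l => if (l : ℕ) + 1 = M then -(p i) else if (i : ℕ) = (l : ℕ) + 1 then 1 else 0

lemma det_comp (M : ℕ) (p : Fin M → ℂ) (w : ℂ) :
    (w • (1 : Matrix (Fin M) (Fin M) ℂ) - compM M p).det
      = w ^ M + ∑ l : Fin M, p l * w ^ (l : ℕ) := by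
  induction M with
  | zero => simp
  | succ K ih =>
    rcases Nat.eq_zero_or_pos K with rfl | hK
    · rw [Matrix.det_fin_one]
      simp [compM]
    obtain ⟨K, rfl⟩ := Nat.exists_eq_succ_of_ne_zero hK.ne'
    set B := w • (1 : Matrix (Fin (K+1+1)) (Fin (K+1+1)) ℂ) - compM (K+1+1) p with hB
    have hrow0 : B 0 0 = w := by
      simp [hB, compM, Matrix.one_apply]
    have hrow : ∀ j : Fin (K + 1), B 0 j.succ = if j = Fin.last K then p 0 else 0 := by
      intro j
      have h1 : ((0 : Fin (K+1+1)) = j.succ) = False := by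
        simp [eq_comm, Fin.succ_ne_zero]
      have : ((j : ℕ) + 1 + 1 = K + 1 + 1) = (j = Fin.last K) := by
        simp only [eq_iff_iff, Fin.ext_iff, Fin.val_last]
        omega
      simp only [hB, Matrix.sub_apply, Matrix.smul_apply, Matrix.one_apply, compM, of_apply,
        Fin.val_succ, h1, if_false, smul_eq_mul, mul_zero, zero_sub, this]
      by_cases hj : j = Fin.last K <;> simp [hj]
    have hminor0 : B.submatrix Fin.succ Fin.succ
        = w • (1 : Matrix (Fin (K+1)) (Fin (K+1)) ℂ) - compM (K+1) (fun i => p i.succ) := by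
      ext i l
      have hc1 : ((l : ℕ) + 1 + 1 = K + 1 + 1) = ((l : ℕ) + 1 = K + 1) := by
        simp [eq_iff_iff]
      have hc2 : ((i : ℕ) + 1 = (l : ℕ) + 1 + 1) = ((i : ℕ) = (l : ℕ) + 1) := by
        simp [eq_iff_iff]
      simp only [Matrix.submatrix_apply, hB, Matrix.sub_apply, Matrix.smul_apply,
        Matrix.one_apply, compM, of_apply, Fin.val_succ, Fin.succ_inj, hc1, hc2]
    have hminorlast : (B.submatrix Fin.succ Fin.castSucc).det = (-1 : ℂ) ^ (K + 1) := by
      have htri : (B.submatrix Fin.succ Fin.castSucc).BlockTriangular id := by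
        intro i l hlt
        have hlt' : (l : ℕ) < (i : ℕ) := hlt
        have hc1 : ((l : ℕ) + 1 = K + 1 + 1) = False := by
          simp [eq_iff_iff]; omega
        have hc2 : ((i : ℕ) + 1 = (l : ℕ) + 1) = False := by
          simp [eq_iff_iff]; omega
        have hc3 : (i.succ = l.castSucc) = False := by
          simp [eq_iff_iff, Fin.ext_iff]; omega
        simp only [Matrix.submatrix_apply, hB, Matrix.sub_apply, Matrix.smul_apply,
          Matrix.one_apply, compM, of_apply, Fin.val_succ, Fin.coe_castSucc, hc1, hc2, hc3,
          if_false, smul_eq_mul, mul_zero, sub_zero]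
      rw [Matrix.det_of_upperTriangular htri]
      have hdiag : ∀ i : Fin (K+1), (B.submatrix Fin.succ Fin.castSucc) i i = -1 := by
        intro i
        have hc1 : ((i : ℕ) + 1 = K + 1 + 1) = False := by
          simp [eq_iff_iff]; omega
        have hc3 : (i.succ = i.castSucc) = False := by
          simp [eq_iff_iff, Fin.ext_iff]
        simp only [Matrix.submatrix_apply, hB, Matrix.sub_apply, Matrix.smul_apply,
          Matrix.one_apply, compM, of_apply, Fin.val_succ, Fin.coe_castSucc, hc1, hc3,
          if_false, if_true, smul_eq_mul, mul_zero, zero_sub]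
      simp only [hdiag]
      simp
    rw [Matrix.det_succ_row_zero]
    rw [Fin.sum_univ_succ]
    have hsum : ∑ j : Fin (K+1), (-1 : ℂ) ^ ((j.succ : Fin (K+1+1)) : ℕ) * B 0 j.succ *
        (B.submatrix Fin.succ (j.succ).succAbove).det
        = (-1 : ℂ) ^ (K + 1) * p 0 * (B.submatrix Fin.succ Fin.castSucc).det := by
      rw [Finset.sum_eq_single (Fin.last K)]
      · rw [hrow (Fin.last K), if_pos rfl]
        have : (Fin.last K).succ = Fin.last (K+1) := rfl
        rw [this, Fin.succAbove_last]
        simp [Fin.val_last]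
      · intro j _ hj
        rw [hrow j, if_neg hj]
        ring
      · intro h
        exact absurd (Finset.mem_univ _) h
    rw [hsum, hminorlast, hrow0]
    have h00 : ((0 : Fin (K+1+1)).succAbove) = Fin.succ := Fin.succAbove_zero
    rw [h00, hminor0, ih]
    have hneg : (-1:ℂ)^(K+1) * p 0 * (-1:ℂ)^(K+1) = p 0 := by
      have h1 : ((-1:ℂ)^(K+1)) * ((-1:ℂ)^(K+1)) = 1 := by
        rw [← pow_add, show K+1+(K+1) = 2*(K+1) from by ring, pow_mul]
        norm_num
      calc (-1:ℂ)^(K+1) * p 0 * (-1:ℂ)^(K+1)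
          = ((-1:ℂ)^(K+1) * (-1:ℂ)^(K+1)) * p 0 := by ring
        _ = p 0 := by rw [h1, one_mul]
    rw [hneg]
    rw [Fin.sum_univ_succ (f := fun l : Fin (K+1+1) => p l * w ^ (l:ℕ))]
    simp only [Fin.val_zero, Fin.val_succ, pow_zero, one_mul, mul_one]
    rw [mul_add, Finset.mul_sum]
    simp only [show ∀ l : Fin (K+1), w * (p l.succ * w^(l:ℕ)) = p l.succ * w ^ ((l:ℕ)+1)
      from fun l => by ring]
    ring

lemma hankel_shift (h : ℕ → ℂ) (Mn k0 N : ℕ) (q : Fin Mn → ℂ)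
    (hrec : ∀ k, h (k + Mn) = -∑ t : Fin Mn, q t * h (k + t)) :
    hankel h (k0 + 1) N Mn = hankel h k0 N Mn * compM Mn q := by
  ext i l
  rw [Matrix.mul_apply]
  by_cases hl : (l : ℕ) + 1 = Mn
  · have harg : k0 + 1 + (i : ℕ) + (l : ℕ) = (k0 + (i : ℕ)) + Mn := by omega
    calc (hankel h (k0+1) N Mn) i l = h ((k0 + (i:ℕ)) + Mn) := by
          simp only [hankel, of_apply]; rw [harg]
      _ = -∑ t : Fin Mn, q t * h ((k0 + (i:ℕ)) + t) := hrec _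
      _ = ∑ t : Fin Mn, h (k0 + (i:ℕ) + (t:ℕ)) * (-(q t)) := by
          rw [← Finset.sum_neg_distrib]
          exact Finset.sum_congr rfl fun t _ => by ring_nf
      _ = ∑ t : Fin Mn, (hankel h k0 N Mn) i t * (compM Mn q) t l := by
          refine Finset.sum_congr rfl fun t _ => ?_
          simp only [hankel, of_apply, compM, if_pos hl]
  · have hl' : (l : ℕ) + 1 < Mn := by omega
    rw [Finset.sum_eq_single (⟨(l : ℕ) + 1, hl'⟩ : Fin Mn)]
    · simp only [hankel, of_apply, compM, if_neg hl]
      rw [if_true, mul_one]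
      congr 1
      omega
    · intro t _ ht
      simp only [hankel, of_apply, compM, if_neg hl]
      rw [if_neg, mul_zero]
      intro hcontra
      exact ht (by ext; simpa using hcontra)
    · intro hcontra
      exact absurd (Finset.mem_univ _) hcontra

/-- the determinant identity
`det((H_{N,M}^{k0})ᴴ * (w • H_{N,M}^{k0} - H_{N,M}^{k0+1}))
  = det((H_{N,M}^{k0})ᴴ * H_{N,M}^{k0}) * P(w)`
where `P = ∏ j, (X - z j) ^ m j` is the Prony polynomial. -/
theorem hankel_pencil_det (n : ℕ) (hn : 1 ≤ n) (z : Fin n → ℂ)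
    (hz : Function.Injective z) (hz0 : ∀ j, z j ≠ 0)
    (m : Fin n → ℕ) (hm : ∀ j, 1 ≤ m j) (M : ℕ) (hM : M = ∑ j, m j)
    (c : (j : Fin n) → Fin (m j) → ℂ) (k0 N : ℕ) (hN : M ≤ N) :
    ∀ w : ℂ,
      ((hankel (hmes z m c) k0 N M)ᴴ *
          (w • hankel (hmes z m c) k0 N M -
            hankel (hmes z m c) (k0 + 1) N M)).det =
        ((hankel (hmes z m c) k0 N M)ᴴ * hankel (hmes z m c) k0 N M).det *
          (∏ j, (X - C (z j)) ^ m j).eval w := by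
  intro w
  set P : ℂ[X] := ∏ j, (X - C (z j)) ^ m j with hP
  set hh : ℕ → ℂ := hmes z m c with hh_def
  have hdeg : P.natDegree = M := by rw [hP, prony_natDegree, hM]
  have hcM : P.coeff M = 1 := by
    rw [← hdeg]
    exact (prony_monic z m).coeff_natDegree
  set q : Fin M → ℂ := fun t => P.coeff (t : ℕ) with hq
  have hrec : ∀ k, hh (k + M) = -∑ t : Fin M, q t * hh (k + t) := by
    intro k
    have h0 := hmes_recurrence z m c k
    rw [← hM] at h0
    rw [Finset.sum_range_succ] at h0
    have hfin : ∑ t : Fin M, q t * hh (k + t)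
        = ∑ l ∈ Finset.range M, P.coeff l * hh (k + l) :=
      Fin.sum_univ_eq_sum_range (fun l => P.coeff l * hh (k + l)) M
    rw [hfin]
    rw [← hP, hcM, one_mul] at h0
    linear_combination h0
  have hshift : hankel hh (k0 + 1) N M = hankel hh k0 N M * compM M q :=
    hankel_shift hh M k0 N q hrec
  have key : w • hankel hh k0 N M - hankel hh (k0 + 1) N M
      = hankel hh k0 N M * (w • (1 : Matrix (Fin M) (Fin M) ℂ) - compM M q) := by
    rw [Matrix.mul_sub, Matrix.mul_smul, Matrix.mul_one, hshift]
  rw [key, ← Matrix.mul_assoc, Matrix.det_mul, det_comp]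
  congr 1
  rw [eval_eq_sum_range, hdeg, Finset.sum_range_succ, hcM, one_mul]
  rw [← Fin.sum_univ_eq_sum_range (fun l => P.coeff l * w ^ l) M]
  ring
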